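/- Let $m_1, m_2, r_1, r_2 \geq 1$ with $m_{12} = \gcd(m_1,m_2)$, $f_{21} = m_1/m_{12}$. Fix integers $\alpha_1, \alpha_2, \beta, \beta^*$ with $\alpha_1 m_1 = \alpha_2 m_2$. For $x \in \mathrm{Hom}_{k_{m_{12}}}(k_{m_1}^{\oplus r_1}, k_{m_2}^{\oplus r_2})$ and $y \in \mathrm{Hom}_{k_{m_{12}}}(k_{m_2}^{\oplus r_2}, k_{m_1}^{\oplus r_1})$, with the $\GG_m$-action $t * x = t^{\beta}\Phi_{m_2,r_2}(t^{\alpha_2})x\Phi_{m_1,r_1}(t^{\alpha_1})^{-1}$ and $t * y = t^{\beta^*}\Phi_{m_1,r_1}(t^{\alpha_1})y\Phi_{m_2,r_2}(t^{\alpha_2})^{-1}$, the trace pairing satisfies $\langle t*x, t*y \rangle = t^{\alpha_1 f_{21}(m_{12}-1) + \beta + \beta^*} \langle x, y \rangle$. -/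
import Mathlib


noncomputable section

variable (k : Type*) [Field k]

/-- The subspace `Hom_{k_{m₁₂}}(k_{m₁}^{r₁}, k_{m₂}^{r₂}) ⊆ Hom_k(k^{m₁r₁}, k^{m₂r₂})` in
the bases of `k_{m₁}, k_{m₂}` given by decreasing powers of `ε`: matrices which are
block-upper-triangular and constant along block diagonals, with blocks of row-size `br`
and column-size `bc` (for the Hom-space above, `br = (m₂/m₁₂)·r₂`, `bc = (m₁/m₁₂)·r₁`). -/
def IsTruncMat {nr nc : ℕ} (br bc : ℕ) (x : Matrix (Fin nr) (Fin nc) k) : Prop :=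
  (∀ (q : Fin nr) (p : Fin nc), (p : ℕ) / bc < (q : ℕ) / br → x q p = 0) ∧
  (∀ (q q' : Fin nr) (p p' : Fin nc),
    (q : ℕ) / br + (p' : ℕ) / bc = (q' : ℕ) / br + (p : ℕ) / bc →
    (q : ℕ) % br = (q' : ℕ) % br → (p : ℕ) % bc = (p' : ℕ) % bc → x q p = x q' p')

/-- The `𝔾_m`-action `t • x = t^β Φ_{m₂,r₂}(t^{α₂}) x Φ_{m₁,r₁}(t^{α₁})⁻¹` on
`Hom_k(k^{m₁r₁}, k^{m₂r₂})`, where `Φ_{m,r}(t)` is block-diagonal with blocks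
`t^{m-1}Id_r, …, t·Id_r, Id_r`; written entrywise. -/
def actMat (α2 α1 β : ℤ) (m2 r2 m1 r1 : ℕ) (t : kˣ)
    (x : Matrix (Fin (m2 * r2)) (Fin (m1 * r1)) k) :
    Matrix (Fin (m2 * r2)) (Fin (m1 * r1)) k :=
  fun q p =>
    ((t ^ (β + α2 * ((m2 : ℤ) - 1 - ((q : ℕ) / r2 : ℕ))
        - α1 * ((m1 : ℤ) - 1 - ((p : ℕ) / r1 : ℕ))) : kˣ) : k) * x q p

/-- The residue–trace pairing `⟨x, y⟩ = res(Tr_{k_{m₁₂}}(x y))` on the products of big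
`k`-matrices in the chosen bases: the trace of the top-right block-diagonal of `Z`, namely
the sum of the entries `Z q v` with `q < br` and `v = (m₁₂ - 1)·br + q`. -/
def pairTR {n : ℕ} (m12 br : ℕ) (Z : Matrix (Fin n) (Fin n) k) : k :=
  ∑ q : Fin n, ∑ v : Fin n,
    if (q : ℕ) < br ∧ (v : ℕ) = (m12 - 1) * br + (q : ℕ) then Z q v else 0

/-- Scaling of the trace pairing under the twisted `𝔾_m`-actions: if `α₁ m₁ = α₂ m₂` then
`⟨t * x, t * y⟩ = t^{α₁ f₂₁ (m₁₂ - 1) + β + β*} ⟨x, y⟩` for `x, y` in the embedded spaces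
`Hom_{k_{m₁₂}}(k_{m₁}^{r₁}, k_{m₂}^{r₂})` and `Hom_{k_{m₁₂}}(k_{m₂}^{r₂}, k_{m₁}^{r₁})`. -/
theorem pair_actMat_eq_zpow_smul_pair
    (m1 m2 r1 r2 : ℕ) (hm1 : 0 < m1) (hm2 : 0 < m2) (hr1 : 0 < r1) (hr2 : 0 < r2)
    (α1 α2 β βs : ℤ) (hα : α1 * m1 = α2 * m2) (t : kˣ)
    (x : Matrix (Fin (m2 * r2)) (Fin (m1 * r1)) k)
    (y : Matrix (Fin (m1 * r1)) (Fin (m2 * r2)) k)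
    (hx : IsTruncMat k ((m2 / Nat.gcd m1 m2) * r2) ((m1 / Nat.gcd m1 m2) * r1) x)
    (hy : IsTruncMat k ((m1 / Nat.gcd m1 m2) * r1) ((m2 / Nat.gcd m1 m2) * r2) y) :
    pairTR k (Nat.gcd m1 m2) ((m2 / Nat.gcd m1 m2) * r2)
        (actMat k α2 α1 β m2 r2 m1 r1 t x * actMat k α1 α2 βs m1 r1 m2 r2 t y)
      = ((t ^ (α1 * ((m1 / Nat.gcd m1 m2 : ℕ) : ℤ) * ((Nat.gcd m1 m2 : ℤ) - 1) + β + βs)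
          : kˣ) : k)
        * pairTR k (Nat.gcd m1 m2) ((m2 / Nat.gcd m1 m2) * r2) (x * y) := by
  have hg : 0 < Nat.gcd m1 m2 := Nat.gcd_pos_of_pos_left _ hm1
  have hf21 : ((m1 / Nat.gcd m1 m2 : ℕ) : ℤ) * (Nat.gcd m1 m2 : ℤ) = (m1 : ℤ) := by
    exact_mod_cast congrArg (Nat.cast : ℕ → ℤ) (Nat.div_mul_cancel (Nat.gcd_dvd_left m1 m2))
  have hf12 : ((m2 / Nat.gcd m1 m2 : ℕ) : ℤ) * (Nat.gcd m1 m2 : ℤ) = (m2 : ℤ) := by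
    exact_mod_cast congrArg (Nat.cast : ℕ → ℤ) (Nat.div_mul_cancel (Nat.gcd_dvd_right m1 m2))
  have hkey : α1 * ((m1 / Nat.gcd m1 m2 : ℕ) : ℤ) = α2 * ((m2 / Nat.gcd m1 m2 : ℕ) : ℤ) := by
    have hg' : (Nat.gcd m1 m2 : ℤ) ≠ 0 := by exact_mod_cast hg.ne'
    apply mul_right_cancel₀ hg'
    rw [mul_assoc, mul_assoc, hf21, hf12, hα]
  unfold pairTR
  rw [Finset.mul_sum]
  refine Finset.sum_congr rfl fun q _ => ?_
  rw [Finset.mul_sum]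
  refine Finset.sum_congr rfl fun v _ => ?_
  split_ifs with h
  · obtain ⟨h1, h2⟩ := h
    have hv : (v : ℕ) / r2 = (Nat.gcd m1 m2 - 1) * (m2 / Nat.gcd m1 m2) + (q : ℕ) / r2 := by
      rw [h2]
      have : (Nat.gcd m1 m2 - 1) * (m2 / Nat.gcd m1 m2 * r2) + (q : ℕ)
          = r2 * ((Nat.gcd m1 m2 - 1) * (m2 / Nat.gcd m1 m2)) + (q : ℕ) := by ring
      rw [this, Nat.mul_add_div hr2]
    rw [Matrix.mul_apply, Matrix.mul_apply, Finset.mul_sum]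
    refine Finset.sum_congr rfl fun p _ => ?_
    simp only [actMat]
    rw [show ∀ a b c d : k, (a * c) * (b * d) = (a * b) * (c * d) from fun a b c d => by ring,
        ← Units.val_mul, ← zpow_add, mul_assoc]
    have hcast : ((Nat.gcd m1 m2 - 1 : ℕ) : ℤ) = (Nat.gcd m1 m2 : ℤ) - 1 := by
      exact_mod_cast Nat.cast_sub hg
    have hv' : (((v : ℕ) / r2 : ℕ) : ℤ)
        = ((Nat.gcd m1 m2 : ℤ) - 1) * ((m2 / Nat.gcd m1 m2 : ℕ) : ℤ) + (((q : ℕ) / r2 : ℕ) : ℤ) := by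
      rw [hv]; push_cast [hcast]; ring
    have hexp : β + α2 * ((m2 : ℤ) - 1 - (((q : ℕ) / r2 : ℕ) : ℤ))
          - α1 * ((m1 : ℤ) - 1 - (((p : ℕ) / r1 : ℕ) : ℤ))
        + (βs + α1 * ((m1 : ℤ) - 1 - (((p : ℕ) / r1 : ℕ) : ℤ))
          - α2 * ((m2 : ℤ) - 1 - (((v : ℕ) / r2 : ℕ) : ℤ)))
        = α1 * ((m1 / Nat.gcd m1 m2 : ℕ) : ℤ) * ((Nat.gcd m1 m2 : ℤ) - 1) + β + βs := by
      rw [hv']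
      linear_combination ((1 : ℤ) - (Nat.gcd m1 m2 : ℤ)) * hkey
    rw [hexp, mul_assoc α1]
  · rw [mul_zero]

end
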